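/- If G is a graph, F is a set of graphs, X is a subset of V(G), and Y is a subset of the closed neighbourhood N[X] of X, then ι(G,F) ≤ |X| + ι(G−Y,F), where ι(H,F) denotes the minimum size of a set D ⊆ V(H) such that H − N[D] contains no copy of a graph in F. -/

import Mathlib

open SimpleGraph

/-- The closed neighbourhood `N[D]` of a set `D` of vertices in a graph `G`. -/
def closedNbhd {V : Type*} (G : SimpleGraph V) (D : Set V) : Set V :=
  D ∪ {v | ∃ d ∈ D, G.Adj d v}

/-- `G` contains a (not necessarily induced) copy of `H`. -/
def ContainsCopy {α β : Type*} (G : SimpleGraph α) (H : SimpleGraph β) : Prop :=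
  ∃ f : β ↪ α, ∀ a b, H.Adj a b → G.Adj (f a) (f b)

/-- `D` is a `P₃`-isolating set of `G`: `G − N[D]` contains no 3-vertex path. -/
def IsP3IsolatingSet {V : Type*} (G : SimpleGraph V) (D : Set V) : Prop :=
  ¬ ContainsCopy (SimpleGraph.induce (closedNbhd G D)ᶜ G) (SimpleGraph.pathGraph 3)

/-- The `P₃`-isolation number of `G`. -/
noncomputable def iotaP3 {V : Type*} (G : SimpleGraph V) : ℕ :=
  sInf {m | ∃ D : Set V, IsP3IsolatingSet G D ∧ D.ncard = m}

/-- `G` has an induced 6-cycle. -/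
def HasInducedC6 {V : Type*} (G : SimpleGraph V) : Prop :=
  ∃ f : Fin 6 ↪ V, ∀ a b, G.Adj (f a) (f b) ↔ (SimpleGraph.cycleGraph 6).Adj a b

/-- A family version of isolating sets: `D` is an `F`-isolating set of `G`. -/
def IsIsolatingSet {V : Type*} {ι : Type*} {β : ι → Type*} (G : SimpleGraph V)
    (F : ∀ i, SimpleGraph (β i)) (D : Set V) : Prop :=
  ∀ i, ¬ ContainsCopy (SimpleGraph.induce (closedNbhd G D)ᶜ G) (F i)

/-- The `F`-isolation number of `G`. -/
noncomputable def iota {V : Type*} {ι : Type*} {β : ι → Type*} (G : SimpleGraph V)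
    (F : ∀ i, SimpleGraph (β i)) : ℕ :=
  sInf {m | ∃ D : Set V, IsIsolatingSet G F D ∧ D.ncard = m}

theorem stmt_0 {V : Type*} [Fintype V] {ι : Type*} {β : ι → Type*}
    (G : SimpleGraph V) (F : ∀ i, SimpleGraph (β i)) (X Y : Set V)
    (hY : Y ⊆ closedNbhd G X) :
    iota G F ≤ X.ncard + iota (SimpleGraph.induce Yᶜ G) F := by
  set H := SimpleGraph.induce Yᶜ G with hH
  by_cases hS : {m | ∃ D : Set ↥(Yᶜ), IsIsolatingSet H F D ∧ D.ncard = m}.Nonempty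
  · obtain ⟨D', hD', hcard⟩ := Nat.sInf_mem hS
    set D : Set V := X ∪ (Subtype.val '' D') with hD
    have c1 : ∀ v : V, v ∈ (closedNbhd G D)ᶜ → v ∈ Yᶜ := by
      intro v hv hvY
      apply hv
      rcases hY hvY with h | ⟨d, hd, hadj⟩
      · exact Or.inl (Or.inl h)
      · exact Or.inr ⟨d, Or.inl hd, hadj⟩
    have c2 : ∀ (v : V) (hv : v ∈ (closedNbhd G D)ᶜ),
        (⟨v, c1 v hv⟩ : ↥(Yᶜ)) ∈ (closedNbhd H D')ᶜ := by
      intro v hv hmem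
      apply hv
      rcases hmem with h | ⟨d, hd, hadj⟩
      · exact Or.inl (Or.inr ⟨_, h, rfl⟩)
      · exact Or.inr ⟨d.val, Or.inr ⟨d, hd, rfl⟩, hadj⟩
    have hiso : IsIsolatingSet G F D := by
      rintro i ⟨f, hf⟩
      apply hD' i
      refine ⟨f.trans ⟨fun v => ⟨⟨v.val, c1 v.val v.2⟩, c2 v.val v.2⟩, ?_⟩, ?_⟩
      · intro a b hab
        have : (a : V) = (b : V) := congrArg (fun x : ↥(closedNbhd H D')ᶜ => ((x : ↥(Yᶜ)) : V)) hab
        exact Subtype.ext this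
      · intro a b hab
        exact hf a b hab
    have h1 : iota G F ≤ D.ncard := Nat.sInf_le ⟨D, hiso, rfl⟩
    have h2 : D.ncard ≤ X.ncard + D'.ncard := by
      calc D.ncard ≤ X.ncard + (Subtype.val '' D').ncard := Set.ncard_union_le _ _
        _ = X.ncard + D'.ncard := by
            rw [Set.ncard_image_of_injective _ Subtype.val_injective]
    have h3 : iota H F = D'.ncard := hcard.symm
    omega
  · -- the isolating-set family for H is empty, so some β i is empty
    have hempty : ∃ i, IsEmpty (β i) := by
      by_contra hne
      push_neg at hne
      apply hS
      refine ⟨(Set.univ : Set ↥(Yᶜ)).ncard, Set.univ, ?_, rfl⟩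
      rintro i ⟨f, -⟩
      have := hne i
      obtain ⟨a⟩ := this
      exact (f a).2 (Or.inl (Set.mem_univ _))
    obtain ⟨i, hi⟩ := hempty
    have h0 : iota G F = 0 := by
      have : {m | ∃ D : Set V, IsIsolatingSet G F D ∧ D.ncard = m} = ∅ := by
        rw [Set.eq_empty_iff_forall_notMem]
        rintro m ⟨D, hiso, -⟩
        exact hiso i ⟨Function.Embedding.ofIsEmpty, fun a => (hi.false a).elim⟩
      rw [iota, this, Nat.sInf_empty]
    omega
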